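/- arXiv:1307.5781 — 3 statements merged into one kernel-verified Lean document; each statement's English description precedes it below -/
import Mathlib

section
/- Let n, m be natural numbers with m ≤ C(n,2). For every finite simple graph G with n vertices and m edges, the number of acyclic orientations of G is at least the number of acyclic orientations of H_{n,m}, i.e. a(G) ≥ a(H_{n,m}). -/
open SimpleGraph

/-- The graph `H_{n,m}` on `n` vertices, where `k` is the unique integer with
`C(k,2) ≤ m < C(k+1,2)` and `r = m - C(k,2)`: a clique on the `k` vertices `0, …, k-1`, one
additional vertex `k` adjacent to exactly `r` of the clique vertices (when `r > 0`), and all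
remaining vertices isolated. -/
def graphHnm (n k r : ℕ) : SimpleGraph (Fin n) where
  Adj a b := a ≠ b ∧
    ((a.val < k ∧ b.val < k) ∨ (a.val = k ∧ b.val < r) ∨ (b.val = k ∧ a.val < r))
  symm := ⟨by
    rintro a b ⟨hab, h⟩
    exact ⟨hab.symm, by tauto⟩⟩
  loopless := ⟨fun a h => h.1 rfl⟩

/-- An orientation of a simple graph `G`: a relation `θ` on the vertices such that for adjacent
vertices exactly one of `θ a b`, `θ b a` holds, and for non-adjacent (or equal) vertices
neither holds. -/
def IsOrientation {V : Type*} (G : SimpleGraph V) (θ : V → V → Prop) : Prop :=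
  ∀ a b : V, (G.Adj a b → (θ a b ↔ ¬ θ b a)) ∧ (¬ G.Adj a b → ¬ θ a b)

/-- A relation is acyclic if its digraph has no directed cycle, i.e. its transitive closure is
irreflexive. -/
def RelAcyclic {V : Type*} (θ : V → V → Prop) : Prop :=
  ∀ v, ¬ Relation.TransGen θ v v

/-- `a(G)`, the number of acyclic orientations of `G`. -/
noncomputable def numAcyclicOrientations {V : Type*} (G : SimpleGraph V) : ℕ :=
  Nat.card {θ : V → V → Prop // IsOrientation G θ ∧ RelAcyclic θ}

lemma relAcyclic_of_exists_lt {V : Type*} {θ : V → V → Prop} (φ : V → ℤ)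
    (h : ∀ a b, θ a b → φ a < φ b) : RelAcyclic θ := by
  intro v hv
  have key : ∀ a b : V, Relation.TransGen θ a b → φ a < φ b := by
    intro a b hab
    induction hab with
    | single h' => exact h _ _ h'
    | tail _ h' ih => exact ih.trans (h _ _ h')
  exact lt_irrefl _ (key v v hv)

instance finiteAO {n : ℕ} (G : SimpleGraph (Fin n)) :
    Finite {θ : Fin n → Fin n → Prop // IsOrientation G θ ∧ RelAcyclic θ} := by
  infer_instance

lemma one_le_numAO {n : ℕ} (G : SimpleGraph (Fin n)) : 1 ≤ numAcyclicOrientations G := by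
  have : Nonempty {θ : Fin n → Fin n → Prop // IsOrientation G θ ∧ RelAcyclic θ} := by
    refine ⟨⟨fun a b => G.Adj a b ∧ a < b, ?_, ?_⟩⟩
    · intro a b
      constructor
      · intro hadj
        have hne : a ≠ b := hadj.ne
        constructor
        · rintro ⟨-, hab⟩ ⟨-, hba⟩; exact absurd (hab.trans hba) (lt_irrefl a)
        · intro hn
          refine ⟨hadj, ?_⟩
          rcases lt_or_gt_of_ne hne with h | h
          · exact h
          · exact absurd ⟨hadj.symm, h⟩ hn
      · rintro hna ⟨h, -⟩; exact hna h
    · exact relAcyclic_of_exists_lt (fun a => (a.val : ℤ))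
        (fun a b hab => by exact_mod_cast Fin.lt_iff_val_lt_val.mp hab.2)
  exact Nat.one_le_iff_ne_zero.mpr (Nat.card_pos).ne'

lemma lemA {n k r : ℕ} (hkn : k ≤ n) (hrk : r < k) :
    numAcyclicOrientations (graphHnm n k r) ≤ Nat.factorial k * (r + 1) := by
  classical
  set H := graphHnm n k r with hH
  have hcard : Nat.card ((Fin k ↪ Fin k) × Fin (r+1)) = Nat.factorial k * (r+1) := by
    rw [Nat.card_prod, Nat.card_eq_fintype_card, Nat.card_eq_fintype_card,
      Fintype.card_embedding_eq, Fintype.card_fin,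
      Nat.descFactorial_self, Fintype.card_fin]
  rw [← hcard, numAcyclicOrientations]
  set AO := {θ : Fin n → Fin n → Prop // IsOrientation H θ ∧ RelAcyclic θ} with hAO
  set emb : Fin k → Fin n := fun i => ⟨i.1, lt_of_lt_of_le i.2 hkn⟩ with hemb
  have embinj : Function.Injective emb := fun i j h =>
    Fin.ext (by simpa [hemb] using congrArg Fin.val h)
  have adjA : ∀ i j : Fin k, i ≠ j → H.Adj (emb i) (emb j) := by
    intro i j hij
    rw [hH]; exact ⟨fun h => hij (embinj h), Or.inl ⟨i.2, j.2⟩⟩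
  -- basic facts
  have noloop : ∀ (θ : AO) (a : Fin n), ¬ θ.1 a a := by
    rintro ⟨θ, hor, hac⟩ a
    exact (hor a a).2 (H.loopless.irrefl a)
  have tour : ∀ (θ : AO) (i j : Fin k), i ≠ j → ¬ θ.1 (emb i) (emb j) → θ.1 (emb j) (emb i) := by
    rintro ⟨θ, hor, hac⟩ i j hij hn
    by_contra hn2
    exact hn (((hor _ _).1 (adjA i j hij)).mpr (by simpa using hn2))
  -- the rank function on the clique
  set rk : (Fin n → Fin n → Prop) → Fin k → ℕ := fun θ i =>
    (Finset.univ.filter fun j : Fin k => θ (emb j) (emb i)).card with hrkdef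
  have rk_mono : ∀ (θ : AO) (i j : Fin k), θ.1 (emb i) (emb j) → rk θ.1 i < rk θ.1 j := by
    intro θ i j hθ
    obtain ⟨θv, hor, hac⟩ := θ
    have hij : i ≠ j := by rintro rfl; exact noloop ⟨θv, hor, hac⟩ _ hθ
    apply Finset.card_lt_card
    rw [Finset.ssubset_iff_of_subset]
    · exact ⟨i, by simpa using hθ, by simpa using noloop ⟨θv, hor, hac⟩ (emb i)⟩
    · intro l hl
      simp only [Finset.mem_filter, Finset.mem_univ, true_and] at hl ⊢
      have hli : l ≠ i := by rintro rfl; exact noloop ⟨θv, hor, hac⟩ _ hl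
      have hlj : l ≠ j := by
        rintro rfl
        exact hac (emb l) (Relation.TransGen.tail (Relation.TransGen.single hl) hθ)
      by_contra hn
      have := tour ⟨θv, hor, hac⟩ l j hlj hn
      exact hac (emb l) (Relation.TransGen.tail
        (Relation.TransGen.tail (Relation.TransGen.single hl) hθ) this)
  have rk_iff : ∀ (θ : AO) (i j : Fin k), i ≠ j →
      (θ.1 (emb i) (emb j) ↔ rk θ.1 i < rk θ.1 j) := by
    intro θ i j hij
    constructor
    · exact rk_mono θ i j
    · intro hlt
      by_contra hn
      have := rk_mono θ j i (tour θ i j hij hn)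
      omega
  have rk_lt : ∀ (θ : AO) (i : Fin k), rk θ.1 i < k := by
    intro θ i
    have h1 : (Finset.univ.filter fun j : Fin k => θ.1 (emb j) (emb i)) ⊂ Finset.univ := by
      rw [Finset.ssubset_univ_iff]
      intro h
      have : i ∈ Finset.univ.filter fun j : Fin k => θ.1 (emb j) (emb i) := by
        rw [h]; exact Finset.mem_univ i
      simp only [Finset.mem_filter, Finset.mem_univ, true_and] at this
      exact noloop θ _ this
    simpa using Finset.card_lt_card h1
  have rk_inj : ∀ (θ : AO) (i j : Fin k), rk θ.1 i = rk θ.1 j → i = j := by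
    intro θ i j hij
    by_contra hne
    rcases Classical.em (θ.1 (emb i) (emb j)) with h | h
    · have := rk_mono θ i j h; omega
    · have := rk_mono θ j i (tour θ i j hne h); omega
  -- the vertex k and in-sets
  set S : (Fin n → Fin n → Prop) → (hk : k < n) → Finset (Fin n) := fun θ hk =>
    Finset.univ.filter fun u => θ u ⟨k, hk⟩ with hSdef
  have uvalr : ∀ (θ : AO) (hk : k < n) (u : Fin n), θ.1 u ⟨k, hk⟩ → u.val < r := by
    rintro ⟨θ, hor, hac⟩ hk u hu
    by_contra hn
    refine (hor u ⟨k, hk⟩).2 ?_ hu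
    rintro (⟨hne, h | h | h⟩ : (graphHnm n k r).Adj u ⟨k, hk⟩)
    · exact absurd h.2 (lt_irrefl k)
    · have hk' : (⟨k, hk⟩ : Fin n).val = k := rfl
      omega
    · exact hn h.2
  have S_le : ∀ (θ : AO) (hk : k < n), (S θ.1 hk).card ≤ r := by
    intro θ hk
    have : S θ.1 hk ⊆ Finset.univ.filter fun u : Fin n => u.val < r := by
      intro u hu
      simp only [hSdef, Finset.mem_filter, Finset.mem_univ, true_and] at hu ⊢
      exact uvalr θ hk u hu
    refine le_trans (Finset.card_le_card this) ?_
    calc (Finset.univ.filter fun u : Fin n => u.val < r).card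
        ≤ (Finset.range r).card := by
          apply Finset.card_le_card_of_injOn (fun u => u.val)
          · intro u hu
            simpa using hu
          · intro u _ w _ h
            exact Fin.ext h
      _ = r := Finset.card_range r
  set jv : AO → ℕ := fun θ => if hk : k < n then (S θ.1 hk).card else 0 with hjvdef
  have jv_le : ∀ θ : AO, jv θ ≤ r := by
    intro θ
    simp only [hjvdef]
    split
    · exact S_le θ _
    · omega
  -- the injection
  set F : AO → (Fin k ↪ Fin k) × Fin (r+1) := fun θ =>
    (⟨fun i => ⟨rk θ.1 i, rk_lt θ i⟩, fun i j h => rk_inj θ i j (by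
        simpa using congrArg Fin.val h)⟩,
     ⟨jv θ, Nat.lt_succ_of_le (jv_le θ)⟩) with hFdef
  apply Nat.card_le_card_of_injective F
  -- injectivity
  intro θ₁ θ₂ hF
  have hσ : ∀ i : Fin k, rk θ₁.1 i = rk θ₂.1 i := by
    intro i
    have := congrArg (fun p => (p.1 i).val) hF
    simp only [hFdef] at this; exact this
  have hjv : jv θ₁ = jv θ₂ := by
    have := congrArg (fun p => p.2.val) hF
    simpa [hFdef] using this
  -- equality of the in-sets of vertex k
  have prefixlem : ∀ (θ : AO) (hk : k < n) (u w : Fin n),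
      u ∈ S θ.1 hk → w.val < r → w ∉ S θ.1 hk → θ.1 u w := by
    intro θ hk u w hu hwr hw
    simp only [hSdef, Finset.mem_filter, Finset.mem_univ, true_and] at hu hw
    obtain ⟨θv, hor, hac⟩ := θ
    have hur : u.val < r := uvalr ⟨θv, hor, hac⟩ hk u hu
    have hwk : w ≠ ⟨k, hk⟩ := by
      intro h; rw [h] at hwr; simp at hwr; omega
    have hadjw : H.Adj w ⟨k, hk⟩ := by rw [hH]; exact ⟨hwk, Or.inr (Or.inr ⟨rfl, hwr⟩)⟩
    have hvkw : θv ⟨k, hk⟩ w := by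
      have := (hor _ _).1 hadjw
      by_contra hn
      exact hn (((hor _ _).1 hadjw.symm).mpr (by simpa using hw))
    have huw : u ≠ w := by rintro rfl; exact hw hu
    set iu : Fin k := ⟨u.val, lt_trans hur hrk⟩ with hiu
    set iw : Fin k := ⟨w.val, lt_trans hwr hrk⟩ with hiw
    have heu : emb iu = u := Fin.ext rfl
    have hew : emb iw = w := Fin.ext rfl
    have hij : iu ≠ iw := fun h => huw (by rw [← heu, ← hew, h])
    by_contra hn
    have hwu : θv w u := by
      have := tour ⟨θv, hor, hac⟩ iu iw hij (by rwa [heu, hew])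
      rwa [heu, hew] at this
    exact hac u (Relation.TransGen.tail
      (Relation.TransGen.tail (Relation.TransGen.single hu) hvkw) hwu)
  have Seq : ∀ hk : k < n, S θ₁.1 hk = S θ₂.1 hk := by
    intro hk
    have hcards : (S θ₁.1 hk).card = (S θ₂.1 hk).card := by
      have := hjv
      simp only [hjvdef, dif_pos hk] at this
      exact this
    by_contra hne
    have h12 : ¬ S θ₁.1 hk ⊆ S θ₂.1 hk := by
      intro h
      exact hne (Finset.eq_of_subset_of_card_le h (le_of_eq hcards.symm))
    have h21 : ¬ S θ₂.1 hk ⊆ S θ₁.1 hk := by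
      intro h
      exact hne (Finset.eq_of_subset_of_card_le h (le_of_eq hcards)).symm
    obtain ⟨u, hu1, hu2⟩ := Finset.not_subset.mp h12
    obtain ⟨w, hw2, hw1⟩ := Finset.not_subset.mp h21
    have hur : u.val < r := by
      have := hu1; simp only [hSdef, Finset.mem_filter, Finset.mem_univ, true_and] at this
      exact uvalr θ₁ hk u this
    have hwr : w.val < r := by
      have := hw2; simp only [hSdef, Finset.mem_filter, Finset.mem_univ, true_and] at this
      exact uvalr θ₂ hk w this
    have h1 : θ₁.1 u w := prefixlem θ₁ hk u w hu1 hwr hw1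
    have h2 : θ₂.1 w u := prefixlem θ₂ hk w u hw2 hur hu2
    set iu : Fin k := ⟨u.val, lt_trans hur hrk⟩ with hiu
    set iw : Fin k := ⟨w.val, lt_trans hwr hrk⟩ with hiw
    have heu : emb iu = u := Fin.ext rfl
    have hew : emb iw = w := Fin.ext rfl
    have huw : u ≠ w := by
      rintro rfl; exact hw1 hu1
    have hij : iu ≠ iw := fun h => huw (by rw [← heu, ← hew, h])
    have hlt : rk θ₁.1 iu < rk θ₁.1 iw := by
      apply (rk_iff θ₁ iu iw hij).mp
      rwa [heu, hew]
    rw [hσ iu, hσ iw] at hlt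
    have h2' : θ₂.1 (emb iu) (emb iw) := (rk_iff θ₂ iu iw hij).mpr hlt
    rw [heu, hew] at h2'
    exact θ₂.2.2 u (Relation.TransGen.tail (Relation.TransGen.single h2') h2)
  -- now prove θ₁ = θ₂
  have key : ∀ (θ θ' : AO), (∀ i : Fin k, rk θ.1 i = rk θ'.1 i) →
      (∀ hk : k < n, S θ.1 hk = S θ'.1 hk) → ∀ a b : Fin n, θ.1 a b → θ'.1 a b := by
    intro θ θ' hσ' hS' a b hab
    have hadj : H.Adj a b := by
      by_contra hn
      exact (θ.2.1 a b).2 hn hab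
    obtain ⟨hne, hc⟩ : (graphHnm n k r).Adj a b := hadj
    rcases hc with ⟨h1, h2⟩ | ⟨h1, h2⟩ | ⟨h1, h2⟩
    · -- both in clique
      set ia : Fin k := ⟨a.val, h1⟩
      set ib : Fin k := ⟨b.val, h2⟩
      have hea : emb ia = a := Fin.ext rfl
      have heb : emb ib = b := Fin.ext rfl
      have hij : ia ≠ ib := fun h => hne (by rw [← hea, ← heb, h])
      have hlt : rk θ.1 ia < rk θ.1 ib := (rk_iff θ ia ib hij).mp (by rwa [hea, heb])
      rw [hσ' ia, hσ' ib] at hlt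
      have := (rk_iff θ' ia ib hij).mpr hlt
      rwa [hea, heb] at this
    · -- a is the vertex k
      have hk : k < n := h1 ▸ a.isLt
      have hva : a = ⟨k, hk⟩ := Fin.ext h1
      subst hva
      have hbk : b ∉ S θ.1 hk := by
        simp only [hSdef, Finset.mem_filter, Finset.mem_univ, true_and]
        intro hbad
        exact θ.2.2 b (Relation.TransGen.tail (Relation.TransGen.single hbad) hab)
      rw [hS' hk] at hbk
      simp only [hSdef, Finset.mem_filter, Finset.mem_univ, true_and] at hbk
      have hadj' : H.Adj (⟨k, hk⟩ : Fin n) b := by rw [hH]; exact ⟨hne, Or.inr (Or.inl ⟨rfl, h2⟩)⟩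
      exact ((θ'.2.1 _ _).1 hadj').mpr hbk
    · -- b is the vertex k
      have hk : k < n := h1 ▸ b.isLt
      have hvb : b = ⟨k, hk⟩ := Fin.ext h1
      subst hvb
      have : a ∈ S θ.1 hk := by
        simp only [hSdef, Finset.mem_filter, Finset.mem_univ, true_and]
        exact hab
      rw [hS' hk] at this
      simp only [hSdef, Finset.mem_filter, Finset.mem_univ, true_and] at this
      exact this
  apply Subtype.ext
  funext a b
  apply propext
  constructor
  · exact key θ₁ θ₂ hσ Seq a b
  · exact key θ₂ θ₁ (fun i => (hσ i).symm) (fun hk => (Seq hk).symm) a b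

def Gdel {n : ℕ} (G : SimpleGraph (Fin n)) (v : Fin n) : SimpleGraph (Fin n) where
  Adj a b := G.Adj a b ∧ a ≠ v ∧ b ≠ v
  symm := ⟨by rintro a b ⟨h, ha, hb⟩; exact ⟨h.symm, hb, ha⟩⟩
  loopless := ⟨fun a h => G.loopless.irrefl a h.1⟩

lemma lemB {n d : ℕ} (G : SimpleGraph (Fin n)) (v : Fin n)
    (hd : (G.neighborSet v).ncard = d) :
    (d + 1) * numAcyclicOrientations (Gdel G v) ≤ numAcyclicOrientations G := by
  classical
  set G' := Gdel G v with hG'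
  set AO' := {θ : Fin n → Fin n → Prop // IsOrientation G' θ ∧ RelAcyclic θ} with hAO'
  set AO := {θ : Fin n → Fin n → Prop // IsOrientation G θ ∧ RelAcyclic θ} with hAO
  have hprod : Nat.card (Fin (d+1) × AO') = (d+1) * numAcyclicOrientations G' := by
    rw [Nat.card_prod, Nat.card_eq_fintype_card (α := Fin (d+1)), Fintype.card_fin]
    rfl
  suffices hmain : Nat.card (Fin (d+1) × AO') ≤ Nat.card AO by
    calc (d + 1) * numAcyclicOrientations G' = Nat.card (Fin (d+1) × AO') := hprod.symm
      _ ≤ Nat.card AO := hmain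
      _ = numAcyclicOrientations G := rfl
  -- the "height" and injective rank certificate ρ
  set hgt : (Fin n → Fin n → Prop) → Fin n → ℕ := fun θ u =>
    {b | Relation.TransGen θ b u}.ncard with hhgt
  set ρ : (Fin n → Fin n → Prop) → Fin n → ℕ := fun θ u => n * hgt θ u + u.val with hρ
  have ρgen : ∀ (θ : Fin n → Fin n → Prop) (a b : Fin n), hgt θ a < hgt θ b →
      ρ θ a < ρ θ b := by
    intro θ a b h
    have : n * hgt θ a + a.val < n * (hgt θ a + 1) := by
      have h2 := a.isLt
      rw [Nat.mul_succ]
      omega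
    calc n * hgt θ a + a.val < n * (hgt θ a + 1) := this
      _ ≤ n * hgt θ b := Nat.mul_le_mul_left n h
      _ ≤ n * hgt θ b + b.val := Nat.le_add_right _ _
  have ρmono : ∀ (θ' : AO') (a b : Fin n), θ'.1 a b → ρ θ'.1 a < ρ θ'.1 b := by
    rintro ⟨θ, hor, hac⟩ a b hab
    apply ρgen
    have hsub : insert a {c | Relation.TransGen θ c a} ⊆ {c | Relation.TransGen θ c b} := by
      rintro c (rfl | hc)
      · exact Relation.TransGen.single hab
      · exact Relation.TransGen.tail hc hab
    have hna : a ∉ {c | Relation.TransGen θ c a} := fun h => hac a h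
    calc hgt θ a < hgt θ a + 1 := Nat.lt_succ_self _
      _ = (insert a {c | Relation.TransGen θ c a}).ncard := by
          rw [Set.ncard_insert_of_notMem hna (Set.toFinite _)]
      _ ≤ hgt θ b := Set.ncard_le_ncard hsub (Set.toFinite _)
  have ρinj : ∀ (θ : Fin n → Fin n → Prop), Function.Injective (ρ θ) := by
    intro θ a b hab
    rcases lt_trichotomy (hgt θ a) (hgt θ b) with h | h | h
    · exact absurd hab (ne_of_lt (ρgen θ a b h))
    · apply Fin.ext
      simp only [hρ, h] at hab
      omega
    · exact absurd hab.symm (ne_of_lt (ρgen θ b a h))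
  -- the rank within the neighborhood of v
  set rank : (Fin n → Fin n → Prop) → Fin n → ℕ := fun θ u =>
    {w | G.Adj v w ∧ ρ θ w < ρ θ u}.ncard with hrank
  have rank_mono : ∀ (θ : Fin n → Fin n → Prop) (u w : Fin n), G.Adj v u →
      ρ θ u < ρ θ w → rank θ u < rank θ w := by
    intro θ u w hu hlt
    have hsub : insert u {x | G.Adj v x ∧ ρ θ x < ρ θ u} ⊆ {x | G.Adj v x ∧ ρ θ x < ρ θ w} := by
      rintro x (rfl | hx)
      · exact ⟨hu, hlt⟩
      · exact ⟨hx.1, hx.2.trans hlt⟩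
    have hnu : u ∉ {x | G.Adj v x ∧ ρ θ x < ρ θ u} := fun h => lt_irrefl _ h.2
    calc rank θ u < rank θ u + 1 := Nat.lt_succ_self _
      _ = (insert u {x | G.Adj v x ∧ ρ θ x < ρ θ u}).ncard := by
          rw [Set.ncard_insert_of_notMem hnu (Set.toFinite _)]
      _ ≤ rank θ w := Set.ncard_le_ncard hsub (Set.toFinite _)
  have rank_lt : ∀ (θ : Fin n → Fin n → Prop) (u : Fin n), G.Adj v u → rank θ u < d := by
    intro θ u hu
    rw [← hd]
    apply Set.ncard_lt_ncard _ (Set.toFinite _)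
    constructor
    · rintro x ⟨hx, -⟩; exact hx
    · intro hsub
      exact lt_irrefl _ (hsub hu).2
  have rank_surj : ∀ (θ : Fin n → Fin n → Prop) (j : ℕ), j < d →
      ∃ u : Fin n, G.Adj v u ∧ rank θ u = j := by
    intro θ j hj
    set g : G.neighborSet v → Fin d := fun u => ⟨rank θ u.1, rank_lt θ u.1 u.2⟩ with hg
    have hginj : Function.Injective g := by
      rintro ⟨u, hu⟩ ⟨w, hw⟩ huw
      have h1 : rank θ u = rank θ w := by simpa [hg] using congrArg Fin.val huw
      rcases lt_trichotomy (ρ θ u) (ρ θ w) with h | h | h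
      · exact absurd h1 (ne_of_lt (rank_mono θ u w hu h))
      · exact Subtype.ext (ρinj θ h)
      · exact absurd h1.symm (ne_of_lt (rank_mono θ w u hw h))
    have hcards : Fintype.card (G.neighborSet v) = Fintype.card (Fin d) := by
      rw [Fintype.card_fin, ← Nat.card_eq_fintype_card, Nat.card_coe_set_eq, hd]
    have hgbij := (Fintype.bijective_iff_injective_and_card g).mpr ⟨hginj, hcards⟩
    obtain ⟨⟨u, hu⟩, hgu⟩ := hgbij.2 ⟨j, hj⟩
    exact ⟨u, hu, by simpa [hg] using congrArg Fin.val hgu⟩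
  -- the extension map
  set ext : AO' → ℕ → (Fin n → Fin n → Prop) := fun θ j => fun x y =>
    θ.1 x y ∨ (G.Adj v x ∧ y = v ∧ rank θ.1 x < j) ∨ (G.Adj v y ∧ x = v ∧ ¬ rank θ.1 y < j)
    with hext
  have hadj' : ∀ (θ : AO') (x y : Fin n), θ.1 x y → G.Adj x y ∧ x ≠ v ∧ y ≠ v := by
    intro θ x y hxy
    by_contra hn
    exact (θ.2.1 x y).2 (fun h => hn (by rw [hG'] at h; exact h)) hxy
  -- the extension is an orientation of G
  have ext_or : ∀ (θ : AO') (j : ℕ), IsOrientation G (ext θ j) := by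
    intro θ j a b
    constructor
    · intro hab
      rcases Classical.em (a = v) with hav | hav
      · rw [hav] at hab ⊢
        have hbv : b ≠ v := fun h => G.loopless.irrefl v (h ▸ hab)
        have hvb : G.Adj v b := hab
        have h1 : ¬ θ.1 v b := fun h => (hadj' θ _ _ h).2.1 rfl
        have h2 : ¬ θ.1 b v := fun h => (hadj' θ _ _ h).2.2 rfl
        simp only [hext]
        constructor
        · rintro (h | ⟨h, -, -⟩ | ⟨-, -, hnr⟩)
          · exact absurd h h1
          · exact absurd h (G.loopless.irrefl v)
          · rintro (h | ⟨-, -, hr⟩ | ⟨h, -, -⟩)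
            · exact h2 h
            · exact hnr hr
            · exact G.loopless.irrefl v h
        · intro hn
          refine Or.inr (Or.inr ⟨hvb, by trivial, fun hr => ?_⟩)
          exact hn (Or.inr (Or.inl ⟨hvb, by trivial, hr⟩))
      · rcases Classical.em (b = v) with hbv | hbv
        · rw [hbv] at hab ⊢
          have hva : G.Adj v a := hab.symm
          have h1 : ¬ θ.1 a v := fun h => (hadj' θ _ _ h).2.2 rfl
          have h2 : ¬ θ.1 v a := fun h => (hadj' θ _ _ h).2.1 rfl
          simp only [hext]
          constructor
          · rintro (h | ⟨-, -, hr⟩ | ⟨h, -, -⟩)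
            · exact absurd h h1
            · rintro (h | ⟨h, -, -⟩ | ⟨-, -, hnr⟩)
              · exact h2 h
              · exact G.loopless.irrefl v h
              · exact hnr hr
            · exact absurd h (G.loopless.irrefl v)
          · intro hn
            refine Or.inr (Or.inl ⟨hva, by trivial, ?_⟩)
            by_contra hr
            exact hn (Or.inr (Or.inr ⟨hva, by trivial, hr⟩))
        · have hG'adj : G'.Adj a b := by rw [hG']; exact ⟨hab, hav, hbv⟩
          have hiff := (θ.2.1 a b).1 hG'adj
          simp only [hext]
          constructor
          · rintro (h | ⟨-, heq, -⟩ | ⟨-, heq, -⟩)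
            · rintro (h' | ⟨-, heq', -⟩ | ⟨-, heq', -⟩)
              · exact (hiff.mp h) h'
              · exact hav heq'
              · exact hbv heq'
            · exact absurd heq hbv
            · exact absurd heq hav
          · intro hn
            left
            apply hiff.mpr
            intro h'
            exact hn (Or.inl h')
    · intro hnadj
      simp only [hext]
      rintro (h | ⟨h, heq, -⟩ | ⟨h, heq, -⟩)
      · exact hnadj (hadj' θ _ _ h).1
      · exact hnadj (heq ▸ h.symm)
      · exact hnadj (heq ▸ h)
  -- the extension is acyclic
  have ext_ac : ∀ (θ : AO') (j : ℕ), j ≤ d → RelAcyclic (ext θ j) := by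
    intro θ j hj
    have hsep : ∃ c : ℤ, (∀ u, G.Adj v u → rank θ.1 u < j → 2 * (ρ θ.1 u : ℤ) < c) ∧
        (∀ u, G.Adj v u → ¬ rank θ.1 u < j → c < 2 * (ρ θ.1 u : ℤ)) := by
      rcases Nat.eq_zero_or_pos j with rfl | hjpos
      · exact ⟨-1, fun u _ h => absurd h (Nat.not_lt_zero _), fun u _ _ => by omega⟩
      · obtain ⟨u₀, hu₀, hr₀⟩ := rank_surj θ.1 (j-1) (by omega)
        refine ⟨2 * (ρ θ.1 u₀ : ℤ) + 1, ?_, ?_⟩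
        · intro u hu hr
          have : ρ θ.1 u ≤ ρ θ.1 u₀ := by
            by_contra hc
            have := rank_mono θ.1 u₀ u hu₀ (by omega)
            omega
          omega
        · intro u hu hr
          have : ρ θ.1 u₀ < ρ θ.1 u := by
            rcases lt_trichotomy (ρ θ.1 u) (ρ θ.1 u₀) with h | h | h
            · have := rank_mono θ.1 u u₀ hu h; omega
            · have := ρinj θ.1 h; subst this; omega
            · exact h
          omega
    obtain ⟨c, hc1, hc2⟩ := hsep
    apply relAcyclic_of_exists_lt (fun x => if x = v then c else 2 * (ρ θ.1 x : ℤ))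
    intro x y hxy
    simp only [hext] at hxy
    rcases hxy with h | ⟨hx, heq, hr⟩ | ⟨hy, heq, hr⟩
    · obtain ⟨-, hxv, hyv⟩ := hadj' θ _ _ h
      simp only [if_neg hxv, if_neg hyv]
      have := ρmono θ x y h
      omega
    · have hxv : x ≠ v := G.ne_of_adj hx.symm
      rw [heq]
      simp only [if_neg hxv, if_pos rfl]
      exact hc1 x hx hr
    · have hyv : y ≠ v := G.ne_of_adj hy.symm
      rw [heq]
      simp only [if_neg hyv, if_pos rfl]
      exact hc2 y hy hr
  -- the injection
  set F : Fin (d+1) × AO' → AO := fun p =>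
    ⟨ext p.2 p.1.val, ext_or p.2 p.1.val, ext_ac p.2 p.1.val (Nat.lt_succ_iff.mp p.1.isLt)⟩
    with hF
  apply Nat.card_le_card_of_injective F
  rintro ⟨j₁, θ₁⟩ ⟨j₂, θ₂⟩ hFeq
  have heq : ext θ₁ j₁.val = ext θ₂ j₂.val := congrArg Subtype.val hFeq
  -- first, the underlying orientations agree
  have hθ : θ₁ = θ₂ := by
    apply Subtype.ext
    funext x y
    apply propext
    have hiff : ∀ (θ θ' : AO') (jj jj' : ℕ), ext θ jj = ext θ' jj' →
        θ.1 x y → θ'.1 x y := by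
      intro θ θ' jj jj' hee hxy
      obtain ⟨-, hxv, hyv⟩ := hadj' θ _ _ hxy
      have h1 : ext θ jj x y := Or.inl hxy
      rw [hee] at h1
      rcases h1 with h | ⟨-, h, -⟩ | ⟨-, h, -⟩
      · exact h
      · exact absurd h hyv
      · exact absurd h hxv
    exact ⟨hiff θ₁ θ₂ j₁.val j₂.val heq, hiff θ₂ θ₁ j₂.val j₁.val heq.symm⟩
  subst hθ
  -- then the thresholds agree
  have hjj : ∀ (ja jb : Fin (d+1)), ext θ₁ ja.val = ext θ₁ jb.val → ja.val < jb.val → False := by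
    intro ja jb hee hlt
    obtain ⟨u, hu, hru⟩ := rank_surj θ₁.1 ja.val (lt_of_lt_of_le hlt (Nat.lt_succ_iff.mp jb.isLt))
    have h2 : ext θ₁ jb.val u v := Or.inr (Or.inl ⟨hu, rfl, by omega⟩)
    rw [← hee] at h2
    rcases h2 with h | ⟨-, -, h⟩ | ⟨h, -, -⟩
    · exact (hadj' θ₁ _ _ h).2.2 rfl
    · omega
    · exact G.loopless.irrefl v h
  have : j₁ = j₂ := by
    rcases lt_trichotomy j₁.val j₂.val with h | h | h
    · exact absurd (hjj j₁ j₂ heq h) not_false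
    · exact Fin.ext h
    · exact absurd (hjj j₂ j₁ heq.symm h) not_false
  rw [this]

-- edge counting for Gdel
lemma edgeSet_Gdel {n : ℕ} (G : SimpleGraph (Fin n)) (v : Fin n) :
    (Gdel G v).edgeSet = G.edgeSet \ G.incidenceSet v := by
  ext e
  induction e with
  | _ x y =>
    simp only [mem_edgeSet, Set.mem_diff, SimpleGraph.incidenceSet, Set.mem_setOf_eq,
      Sym2.mem_iff]
    show (G.Adj x y ∧ x ≠ v ∧ y ≠ v) ↔ _
    constructor
    · rintro ⟨h, hx, hy⟩
      refine ⟨h, ?_⟩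
      rintro ⟨-, rfl | rfl⟩
      · exact hx rfl
      · exact hy rfl
    · rintro ⟨h, hn⟩
      refine ⟨h, fun hx => hn ⟨h, Or.inl hx.symm⟩, fun hy => hn ⟨h, Or.inr hy.symm⟩⟩

lemma card_edge_Gdel {n : ℕ} (G : SimpleGraph (Fin n)) (v : Fin n) :
    Nat.card (Gdel G v).edgeSet = Nat.card G.edgeSet - (G.neighborSet v).ncard := by
  classical
  have h1 : (G.incidenceSet v).ncard = (G.neighborSet v).ncard := by
    rw [← Nat.card_coe_set_eq, ← Nat.card_coe_set_eq]
    exact Nat.card_congr (G.incidenceSetEquivNeighborSet v)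
  rw [Nat.card_coe_set_eq, Nat.card_coe_set_eq, edgeSet_Gdel,
    Set.ncard_diff (G.incidenceSet_subset v) (Set.toFinite _), h1]

-- existence of a vertex of minimal positive degree with the handshake bound
lemma exists_min_vertex {n : ℕ} (G : SimpleGraph (Fin n)) (hpos : 0 < Nat.card G.edgeSet) :
    ∃ (v : Fin n) (d : ℕ), (G.neighborSet v).ncard = d ∧ 1 ≤ d ∧
      (d + 1) * d ≤ 2 * Nat.card G.edgeSet := by
  classical
  have hdeg : ∀ u : Fin n, (G.neighborSet u).ncard = G.degree u := fun u => by
    rw [← Nat.card_coe_set_eq, Nat.card_eq_fintype_card, G.card_neighborSet_eq_degree]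
  obtain ⟨⟨e, he⟩, -⟩ := Nat.card_pos_iff.mp hpos
  obtain ⟨x, y⟩ := e
  rw [mem_edgeSet] at he
  set Vpos := Finset.univ.filter (fun u : Fin n => 0 < G.degree u) with hVpos
  have hx : x ∈ Vpos := by
    simp only [hVpos, Finset.mem_filter, Finset.mem_univ, true_and]
    exact G.degree_pos_iff_exists_adj x |>.mpr ⟨y, he⟩
  obtain ⟨v, hvmem, hmin⟩ := Finset.exists_min_image Vpos (fun u => G.degree u) ⟨x, hx⟩
  simp only [hVpos, Finset.mem_filter, Finset.mem_univ, true_and] at hvmem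
  refine ⟨v, G.degree v, hdeg v, hvmem, ?_⟩
  have handshake : ∑ u : Fin n, G.degree u = 2 * Nat.card G.edgeSet := by
    rw [G.sum_degrees_eq_twice_card_edges, Nat.card_eq_fintype_card, ← edgeFinset_card]
  set W := insert v (G.neighborFinset v) with hW
  have hWcard : W.card = G.degree v + 1 := by
    rw [hW, Finset.card_insert_of_notMem (by simp), card_neighborFinset_eq_degree]
  have hWbound : ∀ u ∈ W, G.degree v ≤ G.degree u := by
    intro u hu
    rw [hW, Finset.mem_insert] at hu
    rcases hu with rfl | hu
    · exact le_refl _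
    · rw [mem_neighborFinset] at hu
      apply hmin
      simp only [hVpos, Finset.mem_filter, Finset.mem_univ, true_and]
      exact G.degree_pos_iff_exists_adj u |>.mpr ⟨v, hu.symm⟩
  calc (G.degree v + 1) * G.degree v = W.card * G.degree v := by rw [hWcard]
    _ ≤ ∑ u ∈ W, G.degree u := by
        rw [← smul_eq_mul]
        exact Finset.card_nsmul_le_sum W _ _ hWbound
    _ ≤ ∑ u : Fin n, G.degree u := Finset.sum_le_sum_of_subset (Finset.subset_univ W)
    _ = 2 * Nat.card G.edgeSet := handshake

-- numeric lemmas
lemma tchoose_succ (k : ℕ) : Nat.choose (k+1) 2 = Nat.choose k 2 + k := by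
  rw [Nat.choose_succ_succ' k 1, Nat.choose_one_right]; ring

lemma key_numeric (k r d r' : ℕ) (h1 : r + 1 ≤ d) (h2 : d + 1 ≤ k) (h3 : r' + d + 1 = r + k) :
    k * (r + 1) ≤ (d + 1) * (r' + 1) := by nlinarith

lemma key_numeric2 (r d : ℕ) (h1 : d ≤ r) : r + 1 ≤ (d + 1) * (r - d + 1) := by
  have h : (d+1) * (r-d+1) = (d+1)*(r-d) + (d + 1) := by ring
  have h2 : r - d ≤ (d+1)*(r-d) := Nat.le_mul_of_pos_left _ (by omega)
  omega


lemma main_aux {n : ℕ} : ∀ (m k r : ℕ), Nat.choose k 2 ≤ m → m < Nat.choose (k+1) 2 →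
    r = m - Nat.choose k 2 → ∀ G : SimpleGraph (Fin n), Nat.card G.edgeSet = m →
    Nat.factorial k * (r + 1) ≤ numAcyclicOrientations G := by
  intro m
  induction m using Nat.strong_induction_on with
  | _ m IH =>
    intro k r hk1 hk2 hr G hG
    have e1 : Nat.choose (k+1) 2 = Nat.choose k 2 + k := tchoose_succ k
    rcases Nat.eq_zero_or_pos m with rfl | hm
    · -- m = 0 forces k = 1, r = 0
      have hk : k = 1 := by
        rcases Nat.lt_or_ge k 2 with h | h
        · interval_cases k
          · simp [Nat.choose] at hk2
          · rfl
        · have := Nat.choose_le_choose 2 h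
          simp [Nat.choose] at this
          omega
      subst hk
      have hr0 : r = 0 := by simpa using hr
      subst hr0
      simpa [Nat.factorial] using one_le_numAO G
    · -- pick a vertex of minimal positive degree
      obtain ⟨v, d, hd, hd1, hhs⟩ := exists_min_vertex G (hG ▸ hm)
      have hsand : Nat.choose (d+1) 2 ≤ m := by
        have h2 : Nat.choose (d+1) 2 = (d+1)*d/2 := by
          rw [Nat.choose_two_right]; simp
        rw [h2]
        have := Nat.div_le_div_right (c := 2) (hG ▸ hhs)
        simpa [Nat.mul_div_cancel_left] using this
      have hdk : d + 1 ≤ k := by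
        by_contra hcon
        have hmono := Nat.choose_le_choose 2 (show k + 1 ≤ d + 1 by omega)
        omega
      have hdm : d ≤ m := by
        have hch : d ≤ Nat.choose (d+1) 2 := by
          have := tchoose_succ d
          omega
        omega
      -- the reduced graph
      have hG' : Nat.card (Gdel G v).edgeSet = m - d := by
        rw [card_edge_Gdel, hG, hd]
      have hrk : r < k := by omega
      rcases Nat.lt_or_ge r d with hcase | hcase
      · -- r < d : k decreases
        obtain ⟨k', rfl⟩ : ∃ k', k = k' + 1 := ⟨k - 1, by omega⟩
        have e2 : Nat.choose (k'+1) 2 = Nat.choose k' 2 + k' := tchoose_succ k'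
        set r' := (m - d) - Nat.choose k' 2 with hr'
        have ih := IH (m - d) (by omega) k' r' (by omega) (by omega) rfl (Gdel G v) hG'
        have hnum : (k'+1) * (r + 1) ≤ (d + 1) * (r' + 1) :=
          key_numeric (k'+1) r d r' (by omega) (by omega) (by omega)
        calc Nat.factorial (k'+1) * (r+1) = (k'+1) * (r+1) * Nat.factorial k' := by
              rw [Nat.factorial_succ]; ring
          _ ≤ (d+1) * (r'+1) * Nat.factorial k' := Nat.mul_le_mul_right _ hnum
          _ = (d+1) * (Nat.factorial k' * (r'+1)) := by ring
          _ ≤ (d+1) * numAcyclicOrientations (Gdel G v) := Nat.mul_le_mul_left _ ih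
          _ ≤ numAcyclicOrientations G := lemB G v hd
      · -- d ≤ r : same k
        have ih := IH (m - d) (by omega) k (r - d) (by omega) (by omega) (by omega)
          (Gdel G v) hG'
        have hnum : r + 1 ≤ (d + 1) * (r - d + 1) := key_numeric2 r d hcase
        calc Nat.factorial k * (r+1) ≤ Nat.factorial k * ((d+1) * (r-d+1)) :=
              Nat.mul_le_mul_left _ hnum
          _ = (d+1) * (Nat.factorial k * (r-d+1)) := by ring
          _ ≤ (d+1) * numAcyclicOrientations (Gdel G v) := Nat.mul_le_mul_left _ ih
          _ ≤ numAcyclicOrientations G := lemB G v hd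

/-- Among all graphs with `n` vertices and `m ≤ C(n,2)` edges, the graph `H_{n,m}` minimises
the number of acyclic orientations: `a(G) ≥ a(H_{n,m})`. -/
theorem numAcyclicOrientations_graphHnm_le (n m k r : ℕ) (hm : m ≤ n * (n - 1) / 2)
    (hk1 : k * (k - 1) / 2 ≤ m) (hk2 : m < (k + 1) * k / 2) (hr : r = m - k * (k - 1) / 2)
    (G : SimpleGraph (Fin n)) (hG : Nat.card G.edgeSet = m) :
    numAcyclicOrientations (graphHnm n k r) ≤ numAcyclicOrientations G := by
  have hc2 : ∀ j : ℕ, Nat.choose j 2 = j * (j - 1) / 2 := Nat.choose_two_right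
  have hk1' : Nat.choose k 2 ≤ m := by rw [hc2]; exact hk1
  have hk2' : m < Nat.choose (k+1) 2 := by
    rw [hc2]; simpa using hk2
  have hr' : r = m - Nat.choose k 2 := by rw [hc2]; exact hr
  have e1 : Nat.choose (k+1) 2 = Nat.choose k 2 + k := tchoose_succ k
  have hrk : r < k := by omega
  rcases Nat.eq_zero_or_pos n with rfl | hn
  · -- n = 0 : everything is trivial
    have hsub : Subsingleton {θ : Fin 0 → Fin 0 → Prop //
        IsOrientation (graphHnm 0 k r) θ ∧ RelAcyclic θ} := by
      constructor
      rintro ⟨θ₁, -⟩ ⟨θ₂, -⟩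
      apply Subtype.ext
      funext a b
      exact absurd a.isLt (by omega)
    calc numAcyclicOrientations (graphHnm 0 k r) ≤ 1 :=
          Finite.card_le_one_iff_subsingleton.mpr hsub
      _ ≤ numAcyclicOrientations G := one_le_numAO G
  · have hkn : k ≤ n := by
      by_contra hcon
      have h1 : Nat.choose (n+1) 2 ≤ Nat.choose k 2 := Nat.choose_le_choose 2 (by omega)
      have h2 : Nat.choose (n+1) 2 = Nat.choose n 2 + n := tchoose_succ n
      have hm' : m ≤ Nat.choose n 2 := by rw [hc2]; exact hm
      omega
    calc numAcyclicOrientations (graphHnm n k r) ≤ Nat.factorial k * (r + 1) :=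
          lemA hkn hrk
      _ ≤ numAcyclicOrientations G := main_aux m k r hk1' hk2' hr' G hG
end

section
/- Let n, m be natural numbers with 0 < m ≤ C(n,2), and let k be the largest integer with m > C(k,2). Then every finite simple graph G with n vertices and m edges has at most n − k connected components, and this bound is attained by some graph with n vertices and m edges. -/
open SimpleGraph Finset

lemma choose_two_succ (b : ℕ) : (b + 1).choose 2 = b.choose 2 + b := by
  simpa [Nat.choose_one_right, add_comm] using Nat.choose_succ_succ b 1

-- uniqueness of triangular decomposition
lemma tri_unique (p q p' q' : ℕ) (h1 : p < q) (h2 : p' < q')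
    (h : q.choose 2 + p = q'.choose 2 + p') : q = q' ∧ p = p' := by
  have key : ∀ a b a' b' : ℕ, a < b → a' < b' → b < b' →
      b.choose 2 + a ≠ b'.choose 2 + a' := by
    intro a b a' b' hab hab' hbb'
    have h3 : (b + 1).choose 2 = b.choose 2 + b := choose_two_succ b
    have h4 : (b + 1).choose 2 ≤ b'.choose 2 := Nat.choose_le_choose 2 hbb'
    omega
  rcases lt_trichotomy q q' with hlt | rfl | hgt
  · exact absurd h (key _ _ _ _ h1 h2 hlt)
  · omega
  · exact absurd h.symm (key _ _ _ _ h2 h1 hgt)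

section Construction
variable (n m k : ℕ)

def myG : SimpleGraph (Fin n) where
  Adj a b := a ≠ b ∧ (max a.1 b.1).choose 2 + min a.1 b.1 < m
  symm := by constructor; intro a b ⟨h1, h2⟩; exact ⟨h1.symm, by rwa [max_comm, min_comm]⟩
  loopless := by constructor; intro a ⟨h1, _⟩; exact h1 rfl

lemma myG_adj (a b : Fin n) : (myG n m).Adj a b ↔
    a ≠ b ∧ (max a.1 b.1).choose 2 + min a.1 b.1 < m := Iff.rfl

lemma myG_card_edge (hm0 : 0 < m) (hk2 : m ≤ (k + 1).choose 2) (hkn : k < n) :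
    Nat.card (myG n m).edgeSet = m := by
  set L : Sym2 (Fin n) → ℕ := Sym2.lift ⟨fun a b => (max a.1 b.1).choose 2 + min a.1 b.1,
    fun a b => by dsimp only; rw [max_comm, min_comm]⟩ with hL
  have hLlt : ∀ e : (myG n m).edgeSet, L e.1 < m := by
    rintro ⟨e, he⟩
    induction e using Sym2.ind with
    | _ a b => exact ((myG n m).mem_edgeSet.mp he).2
  set enc : (myG n m).edgeSet → Fin m := fun e => ⟨L e.1, hLlt e⟩ with henc
  have hbij : Function.Bijective enc := by
    constructor
    · rintro ⟨e1, he1⟩ ⟨e2, he2⟩ h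
      induction e1 using Sym2.ind with
    | _ a b =>
      induction e2 using Sym2.ind with
    | _ c d =>
      simp only [henc, Fin.mk.injEq, Subtype.mk.injEq] at h ⊢
      have he1' := ((myG n m).mem_edgeSet.mp he1).1
      have he2' := ((myG n m).mem_edgeSet.mp he2).1
      simp only [hL, Sym2.lift_mk] at h
      have hab : (a.1 : ℕ) ≠ b.1 := fun hc => he1' (Fin.ext hc)
      have hcd : (c.1 : ℕ) ≠ d.1 := fun hc => he2' (Fin.ext hc)
      obtain ⟨h1, h2⟩ := tri_unique (min a.1 b.1) (max a.1 b.1) (min c.1 d.1) (max c.1 d.1)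
        (by omega) (by omega) h
      have hor : (a.1 = c.1 ∧ b.1 = d.1) ∨ (a.1 = d.1 ∧ b.1 = c.1) := by omega
      rcases hor with ⟨hx, hy⟩ | ⟨hx, hy⟩
      · rw [Fin.ext hx, Fin.ext hy]
      · rw [Fin.ext hx, Fin.ext hy]; exact Sym2.eq_swap
    · rintro ⟨r, hr⟩
      set P : ℕ → Prop := fun b => b.choose 2 ≤ r with hP
      have hP1 : P 1 := by simp [hP]
      set q := Nat.findGreatest P (k + 1) with hq
      have hq1 : 1 ≤ q := Nat.le_findGreatest (by omega) hP1
      have hqspec : P q := Nat.findGreatest_spec (n := k + 1) (m := 1) (by omega) hP1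
      have hqk : q ≤ k := by
        by_contra hc
        have hq' : q = k + 1 := le_antisymm (Nat.findGreatest_le _) (by omega)
        have := hq' ▸ hqspec
        simp only [hP] at this
        omega
      have hgt : ¬ P (q + 1) := Nat.findGreatest_is_greatest (n := k + 1) (by omega) (by omega)
      simp only [hP] at hqspec hgt
      have hsucc : (q + 1).choose 2 = q.choose 2 + q := choose_two_succ q
      set p := r - q.choose 2 with hp
      have hpq : p < q := by omega
      have hqn : q < n := by omega
      refine ⟨⟨s(⟨p, by omega⟩, ⟨q, hqn⟩), ?_⟩, ?_⟩
      · rw [SimpleGraph.mem_edgeSet, myG_adj]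
        refine ⟨fun hc => ?_, ?_⟩
        · have := congrArg Fin.val hc
          simp only at this
          omega
        · simp only
          rw [max_eq_right hpq.le, min_eq_left hpq.le]
          omega
      · simp only [henc, hL, Sym2.lift_mk]
        apply Fin.ext
        simp only
        rw [max_eq_right hpq.le, min_eq_left hpq.le]
        omega
  rw [Nat.card_eq_of_bijective enc hbij, Nat.card_eq_fintype_card, Fintype.card_fin]

end Construction

lemma myG_card_components (hk1 : k.choose 2 < m) (hk2 : m ≤ (k + 1).choose 2)
    (hk0 : 1 ≤ k) (hkn : k < n) :
    Nat.card (myG n m).ConnectedComponent = n - k := by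
  set G := myG n m with hG
  set κ := G.connectedComponentMk with hκ
  have hn0 : 0 < n := by omega
  -- all small vertices in component of 0
  have hsmall : ∀ v : Fin n, v.1 ≤ k → κ v = κ ⟨0, hn0⟩ := by
    intro v hv
    rcases Nat.eq_zero_or_pos v.1 with h0 | h0
    · congr 1; exact Fin.ext h0
    · refine ConnectedComponent.sound ?_
      refine SimpleGraph.Adj.reachable ?_
      rw [hG, myG_adj]
      have h0 : (⟨0, hn0⟩ : Fin n).1 = 0 := rfl
      refine ⟨fun hc => by have := congrArg Fin.val hc; omega, ?_⟩
      rw [max_eq_left (by omega), min_eq_right (by omega)]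
      have : v.1.choose 2 ≤ k.choose 2 := Nat.choose_le_choose 2 hv
      omega
  -- big vertices isolated
  have hiso : ∀ v : Fin n, k < v.1 → ∀ w, ¬ G.Adj v w := by
    intro v hv w hadj
    rw [hG, myG_adj] at hadj
    have h1 : k + 1 ≤ max v.1 w.1 := by omega
    have h2 : (k + 1).choose 2 ≤ (max v.1 w.1).choose 2 := Nat.choose_le_choose 2 h1
    omega
  have hisoeq : ∀ v w : Fin n, k < v.1 → κ v = κ w → v = w := by
    intro v w hv h
    have hr : G.Reachable v w := (SimpleGraph.ConnectedComponent.eq).1 h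
    obtain ⟨p⟩ := hr
    cases p with
    | nil => rfl
    | cons h' _ => exact absurd h' (hiso v hv _)
  -- the bijection
  set F : Fin (n - k) → G.ConnectedComponent := fun i =>
    if h : i.1 = 0 then κ ⟨0, hn0⟩ else κ ⟨k + i.1, by omega⟩ with hF
  have hbij : Function.Bijective F := by
    constructor
    · intro i j hij
      simp only [hF] at hij
      split_ifs at hij with h1 h2 h2
      · exact Fin.ext (by omega)
      · exact absurd (hisoeq _ _ (show k < k + j.1 by omega) hij.symm) (fun hc => by
          rw [Fin.mk.injEq] at hc; omega)
      · exact absurd (hisoeq _ _ (show k < k + i.1 by omega) hij) (fun hc => by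
          rw [Fin.mk.injEq] at hc; omega)
      · have h3 := hisoeq _ _ (show k < k + i.1 by omega) hij
        rw [Fin.mk.injEq] at h3
        exact Fin.ext (by omega)
    · intro C
      obtain ⟨v, rfl⟩ := C.exists_rep
      rcases le_or_gt v.1 k with hv | hv
      · exact ⟨⟨0, by omega⟩, by simp only [hF, dif_pos]; exact (hsmall v hv).symm⟩
      · refine ⟨⟨v.1 - k, by omega⟩, ?_⟩
        simp only [hF]
        rw [dif_neg (show ¬ (v.1 - k) = 0 by omega)]
        congr 1
        exact Fin.ext (show k + (v.1 - k) = v.1 by omega)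
  rw [← Nat.card_eq_of_bijective F hbij, Nat.card_eq_fintype_card, Fintype.card_fin]

-- sum of g_i^2 ≤ (sum g_i)^2  over nonneg nats
example (s : Finset ℕ) (g : ℕ → ℕ) : ∑ i ∈ s, g i * g i ≤ (∑ i ∈ s, g i) * (∑ i ∈ s, g i) := by
  calc ∑ i ∈ s, g i * g i ≤ ∑ i ∈ s, g i * (∑ j ∈ s, g j) :=
        Finset.sum_le_sum fun i hi => Nat.mul_le_mul_left _ (Finset.single_le_sum (fun _ _ => Nat.zero_le _) hi)
    _ = (∑ i ∈ s, g i) * (∑ i ∈ s, g i) := by rw [← Finset.sum_mul, mul_comm]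

theorem bound_part (n m : ℕ) (G : SimpleGraph (Fin n)) [DecidableRel G.Adj]
    (hG : G.edgeFinset.card = m) :
    2 * m ≤ (n - Nat.card G.ConnectedComponent) * (n - Nat.card G.ConnectedComponent + 1) := by
  classical
  set κ := G.connectedComponentMk with hκ
  have hsurj : Function.Surjective κ := fun C => C.exists_rep
  set c := Nat.card (ConnectedComponent G) with hc
  -- fiber cardinality
  set f : G.ConnectedComponent → ℕ := fun C => (univ.filter fun v => κ v = C).card with hf
  have hfpos : ∀ C, 1 ≤ f C := by
    intro C
    obtain ⟨v, hv⟩ := hsurj C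
    exact Finset.card_pos.2 ⟨v, by simp [hf, hv]⟩
  have hsumf : ∑ C, f C = n := by
    rw [hf]
    rw [← Finset.card_eq_sum_card_fiberwise (fun v _ => Finset.mem_univ (κ v))]
    simp
  -- degree bound
  have hdeg : ∀ v, G.degree v + 1 ≤ f (κ v) := by
    intro v
    rw [← G.card_neighborFinset_eq_degree, hf]
    have : insert v (G.neighborFinset v) ⊆ univ.filter fun w => κ w = κ v := by
      intro w hw
      simp only [Finset.mem_insert, mem_neighborFinset] at hw
      simp only [Finset.mem_filter, Finset.mem_univ, true_and]
      rcases hw with rfl | hw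
      · rfl
      · exact (ConnectedComponent.sound (G.adj_symm hw).reachable)
    calc G.degree v + 1 = (insert v (G.neighborFinset v)).card := by
          rw [Finset.card_insert_of_notMem (by simp), G.card_neighborFinset_eq_degree]
      _ ≤ _ := Finset.card_le_card this
  -- fiberwise sum
  have hsum2 : 2 * m + n ≤ ∑ C, f C * f C := by
    have h1 : ∑ v, (G.degree v + 1) ≤ ∑ v : Fin n, f (κ v) :=
      Finset.sum_le_sum fun v _ => hdeg v
    have h2 : ∑ v : Fin n, f (κ v) = ∑ C, f C * f C := by
      rw [← Finset.sum_fiberwise' Finset.univ κ f]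
      refine Finset.sum_congr rfl fun C _ => ?_
      rw [Finset.sum_const, smul_eq_mul]
    have h3 : ∑ v, (G.degree v + 1) = 2 * m + n := by
      rw [Finset.sum_add_distrib, G.sum_degrees_eq_twice_card_edges, hG]
      simp
    omega
  set g : G.ConnectedComponent → ℕ := fun C => f C - 1 with hg
  have hcard : Nat.card G.ConnectedComponent = Fintype.card G.ConnectedComponent := Nat.card_eq_fintype_card
  have hgf : ∀ C, f C = g C + 1 := fun C => (Nat.succ_pred_eq_of_pos (hfpos C)).symm
  have hsumg : ∑ C, g C + c = n := by
    have : ∑ C, f C = ∑ C, g C + Fintype.card G.ConnectedComponent := by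
      rw [Finset.sum_congr rfl (fun C _ => hgf C), Finset.sum_add_distrib,
        Finset.sum_const, smul_eq_mul, mul_one, Finset.card_univ]
    omega
  have hcn : c ≤ n := by omega
  set r := ∑ C, g C with hr
  have hsq : ∑ C, g C * g C ≤ r * r := by
    calc ∑ C, g C * g C ≤ ∑ C, g C * r :=
          Finset.sum_le_sum fun i hi => Nat.mul_le_mul_left _ (Finset.single_le_sum (fun _ _ => Nat.zero_le _) hi)
      _ = r * r := by rw [← Finset.sum_mul]
  have hfin : ∑ C, f C * f C ≤ r * r + 2 * r + c := by
    have : ∑ C, f C * f C = ∑ C, g C * g C + 2 * r + c := by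
      have e1 : ∀ C, f C * f C = g C * g C + 2 * g C + 1 := by
        intro C; rw [hgf C]; ring
      rw [Finset.sum_congr rfl (fun C _ => e1 C), Finset.sum_add_distrib, Finset.sum_add_distrib,
        ← Finset.mul_sum, Finset.sum_const, smul_eq_mul, mul_one, Finset.card_univ, ← hcard]
    omega
  have hrn : r = n - c := by omega
  rw [← hrn]
  have : r * (r + 1) = r * r + r := by ring
  omega

/-- Let `k` be the largest integer with `m > C(k,2)`, where `0 < m ≤ C(n,2)`.  Then every graph
with `n` vertices and `m` edges has at most `n - k` connected components, and this bound is
attained by some graph with `n` vertices and `m` edges. -/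
theorem max_connectedComponents (n m k : ℕ) (hm0 : 0 < m) (hm : m ≤ n * (n - 1) / 2)
    (hk1 : k * (k - 1) / 2 < m) (hk2 : m ≤ (k + 1) * k / 2) :
    (∀ G : SimpleGraph (Fin n), Nat.card G.edgeSet = m →
      Nat.card G.ConnectedComponent ≤ n - k) ∧
    ∃ G : SimpleGraph (Fin n), Nat.card G.edgeSet = m ∧
      Nat.card G.ConnectedComponent = n - k := by
  classical
  have hk1' : k.choose 2 < m := by rwa [Nat.choose_two_right]
  have hk2' : m ≤ (k + 1).choose 2 := by
    rwa [Nat.choose_two_right, Nat.add_sub_cancel]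
  have hk0 : 1 ≤ k := by
    rcases Nat.eq_zero_or_pos k with rfl | h
    · omega
    · exact h
  have hkn : k < n := by
    by_contra hc
    have h1 : n.choose 2 ≤ k.choose 2 := Nat.choose_le_choose 2 (by omega)
    rw [Nat.choose_two_right, Nat.choose_two_right] at h1
    omega
  constructor
  · intro G hGm
    have hGfin : G.edgeFinset.card = m := by
      rw [← hGm, Nat.card_eq_fintype_card, ← Set.toFinset_card]
      congr 1
    have hb := bound_part n m G hGfin
    have hc : Nat.card G.ConnectedComponent ≤ n := by
      have := Nat.card_le_card_of_surjective G.connectedComponentMk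
        (fun C => C.exists_rep)
      simpa using this
    set c := Nat.card G.ConnectedComponent
    by_contra hcon
    have hr : n - c + 1 ≤ k := by omega
    have h2 : (n - c) * (n - c + 1) ≤ (k - 1) * k :=
      Nat.mul_le_mul (by omega) hr
    have h3 : (k - 1) * k = k * (k - 1) := mul_comm _ _
    rw [Nat.choose_two_right] at hk1'
    omega
  · exact ⟨myG n m, myG_card_edge n m k hm0 hk2' hkn,
      myG_card_components (n := n) (m := m) (k := k) hk1' hk2' hk0 hkn⟩
end

section
/- Let n, m be natural numbers with 0 < m ≤ C(n,2), let k be the largest integer with m > C(k,2), and suppose m ≠ C(k,2) + 1. Then a finite simple graph G with n vertices and m edges has exactly n − k connected components (the maximum possible) if and only if G has a single connected component on k+1 vertices containing all m edges and n − k − 1 isolated vertices. -/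
open SimpleGraph Finset

private lemma two_mul_choose_two' (x : ℕ) : 2 * ((x + 1).choose 2) = (x + 1) * x := by
  rw [Nat.choose_two_right]
  have h : 2 ∣ (x + 1) * ((x + 1) - 1) := by
    simpa [Nat.mul_comm] using (Nat.even_mul_succ_self x).two_dvd
  simpa using Nat.mul_div_cancel' h

private lemma choose_two_superadd (b B : ℕ) :
    (b + 1).choose 2 + (B + 1).choose 2 ≤ (b + B + 1).choose 2 := by
  have h1 := two_mul_choose_two' b
  have h2 := two_mul_choose_two' B
  have h3 := two_mul_choose_two' (b + B)
  have : 2 * ((b + 1).choose 2 + (B + 1).choose 2) ≤ 2 * ((b + B + 1).choose 2) := by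
    nlinarith
  omega

private lemma sum_choose_two_le {ι : Type*} (t : Finset ι) (f : ι → ℕ) :
    ∑ i ∈ t, (f i + 1).choose 2 ≤ ((∑ i ∈ t, f i) + 1).choose 2 := by
  classical
  induction t using Finset.cons_induction with
  | empty => simp
  | cons a s ha ih =>
    rw [Finset.sum_cons, Finset.sum_cons]
    calc (f a + 1).choose 2 + ∑ i ∈ s, (f i + 1).choose 2
        ≤ (f a + 1).choose 2 + ((∑ i ∈ s, f i) + 1).choose 2 := by omega
      _ ≤ (f a + (∑ i ∈ s, f i) + 1).choose 2 := choose_two_superadd _ _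

private lemma choose_two_split (e d : ℕ) :
    (e + 2).choose 2 + (d + 2).choose 2 ≤ (e + d + 2).choose 2 + 1 := by
  have h1 := two_mul_choose_two' (e + 1)
  have h2 := two_mul_choose_two' (d + 1)
  have h3 := two_mul_choose_two' (e + d + 1)
  have : 2 * ((e + 2).choose 2 + (d + 2).choose 2) ≤ 2 * ((e + d + 2).choose 2 + 1) := by
    nlinarith
  omega

private lemma reachable_eq_of_isolated {V : Type*} {G : SimpleGraph V} {v w : V}
    (hv : ∀ w, ¬ G.Adj v w) (h : G.Reachable v w) : w = v := by
  obtain ⟨p⟩ := h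
  cases p with
  | nil => rfl
  | cons h' p => exact absurd h' (hv _)

/-- The number of vertices in a connected component, as a `Finset` count. -/
private def cSize {V : Type*} [Fintype V] (G : SimpleGraph V)
    [DecidableEq G.ConnectedComponent] (C : G.ConnectedComponent) : ℕ :=
  ((univ : Finset V).filter (fun v => G.connectedComponentMk v = C)).card

/-- The number of edges inside a connected component. -/
private def cEdges {V : Type*} [Fintype V] [LinearOrder V] (G : SimpleGraph V)
    [Fintype G.edgeSet] [DecidableEq G.ConnectedComponent] (C : G.ConnectedComponent) : ℕ :=
  (G.edgeFinset.filter (fun e => G.connectedComponentMk e.inf = C)).card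

/-- Let `k` be the largest integer with `m > C(k,2)`, where `0 < m ≤ C(n,2)`, and suppose
`m ≠ C(k,2) + 1`.  A graph `G` with `n` vertices and `m` edges has exactly `n - k` connected
components (the maximum possible) iff `G` has a single connected component on `k + 1` vertices
containing all `m` edges, all the other vertices being isolated. -/
theorem max_connectedComponents_iff (n m k : ℕ) (hm0 : 0 < m) (hm : m ≤ n * (n - 1) / 2)
    (hk1 : k * (k - 1) / 2 < m) (hk2 : m ≤ (k + 1) * k / 2) (hne : m ≠ k * (k - 1) / 2 + 1)
    (G : SimpleGraph (Fin n)) (hG : Nat.card G.edgeSet = m) :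
    Nat.card G.ConnectedComponent = n - k ↔
      ∃ C : G.ConnectedComponent, Nat.card C.supp = k + 1 ∧
        ∀ v : Fin n, v ∉ C.supp → ∀ w : Fin n, ¬ G.Adj v w := by
  classical
  haveI : Fintype G.ConnectedComponent := Fintype.ofFinite _
  haveI : Fintype G.edgeSet := Fintype.ofFinite _
  haveI : DecidableEq G.ConnectedComponent := Classical.decEq _
  have hsupp_card : ∀ C : G.ConnectedComponent, Nat.card C.supp = cSize G C := by
    intro C
    have hset : C.supp = ↑((univ : Finset (Fin n)).filter
        (fun v => G.connectedComponentMk v = C)) := by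
      ext v
      simp [ConnectedComponent.mem_supp_iff]
    unfold cSize
    rw [hset, Nat.card_coe_set_eq, Set.ncard_coe_finset]
  -- the sizes sum to n
  have hsum : ∑ C : G.ConnectedComponent, cSize G C = n := by
    have h := Finset.card_eq_sum_card_fiberwise
      (f := G.connectedComponentMk) (s := (univ : Finset (Fin n)))
      (t := (univ : Finset G.ConnectedComponent)) (fun v _ => Finset.mem_univ _)
    simp only [Finset.card_univ, Fintype.card_fin] at h
    unfold cSize
    exact h.symm
  -- every component is nonempty
  have hpos : ∀ C : G.ConnectedComponent, 1 ≤ cSize G C := by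
    intro C
    obtain ⟨v, hv⟩ := C.exists_rep
    refine Finset.card_pos.2 ⟨v, ?_⟩
    simp only [Finset.mem_filter, Finset.mem_univ, true_and]
    exact hv
  have hcomp_mem : ∀ e ∈ G.edgeFinset, ∀ v ∈ e,
      G.connectedComponentMk v = G.connectedComponentMk e.inf := by
    intro e he v hv
    induction e with
    | _ a b =>
      rw [SimpleGraph.mem_edgeFinset, SimpleGraph.mem_edgeSet] at he
      have hab : G.connectedComponentMk a = G.connectedComponentMk b :=
        SimpleGraph.ConnectedComponent.connectedComponentMk_eq_of_adj he
      have hinf : s(a, b).inf = a ⊓ b := Sym2.inf_mk a b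
      have h2 : a ⊓ b = a ∨ a ⊓ b = b := by
        rcases le_total a b with h | h
        · exact Or.inl (inf_eq_left.2 h)
        · exact Or.inr (inf_eq_right.2 h)
      rw [Sym2.mem_iff] at hv
      rw [hinf]
      rcases hv with rfl | rfl <;> rcases h2 with h2 | h2 <;> rw [h2] <;>
        first | rfl | exact hab.symm | exact hab
  -- edge count per component
  have hesum : ∑ C : G.ConnectedComponent, cEdges G C = m := by
    have h := Finset.card_eq_sum_card_fiberwise
      (f := fun e => G.connectedComponentMk (Sym2.inf e)) (s := G.edgeFinset)
      (t := (univ : Finset G.ConnectedComponent)) (fun e _ => Finset.mem_univ _)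
    have h2 : G.edgeFinset.card = m := by
      rw [SimpleGraph.edgeFinset_card, ← Nat.card_eq_fintype_card]
      exact hG
    unfold cEdges
    exact h.symm.trans h2
  -- the number of edges in a component is at most (size choose 2)
  have hekey : ∀ C : G.ConnectedComponent, cEdges G C ≤ (cSize G C).choose 2 := by
    intro C
    have hle : cEdges G C ≤ (Finset.powersetCard 2
        ((univ : Finset (Fin n)).filter (fun v => G.connectedComponentMk v = C))).card := by
      unfold cEdges
      apply Finset.card_le_card_of_injOn
        (Sym2.lift ⟨fun a b => ({a, b} : Finset (Fin n)), fun a b => Finset.pair_comm a b⟩)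
      · intro e he
        rw [Finset.mem_coe, Finset.mem_filter] at he
        obtain ⟨he1, he2⟩ := he
        induction e with
        | _ a b =>
          rw [Sym2.lift_mk]
          rw [Finset.mem_coe, Finset.mem_powersetCard]
          have hadj : G.Adj a b := by
            rw [SimpleGraph.mem_edgeFinset, SimpleGraph.mem_edgeSet] at he1
            exact he1
          constructor
          · intro x hx
            rw [Finset.mem_insert, Finset.mem_singleton] at hx
            rw [Finset.mem_filter]
            refine ⟨Finset.mem_univ _, ?_⟩
            rw [← he2]
            apply hcomp_mem _ he1
            rw [Sym2.mem_iff]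
            exact hx
          · exact Finset.card_pair hadj.ne
      · intro e1 h1 e2 h2 heq
        simp only [Finset.coe_filter, Set.mem_setOf_eq] at h1 h2
        induction e1 with
        | _ a b =>
          induction e2 with
          | _ c d =>
            simp only [Sym2.lift_mk] at heq
            have hab : a ≠ b := by
              have := h1.1
              rw [SimpleGraph.mem_edgeFinset, SimpleGraph.mem_edgeSet] at this
              exact this.ne
            have ha : a ∈ ({c, d} : Finset (Fin n)) := by
              rw [← heq]; simp
            have hb : b ∈ ({c, d} : Finset (Fin n)) := by
              rw [← heq]; simp
            have hc : c ∈ ({a, b} : Finset (Fin n)) := by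
              rw [heq]; simp
            have hd : d ∈ ({a, b} : Finset (Fin n)) := by
              rw [heq]; simp
            simp only [Finset.mem_insert, Finset.mem_singleton] at ha hb hc hd
            rw [Sym2.eq_iff]
            tauto
    calc cEdges G C ≤ _ := hle
      _ = (cSize G C).choose 2 := Finset.card_powersetCard 2 _
  -- n > k
  have hkn : k < n := by
    by_contra h
    push_neg at h
    have h1 : n * (n - 1) ≤ k * (k - 1) := Nat.mul_le_mul h (Nat.sub_le_sub_right h 1)
    have h2 : n * (n - 1) / 2 ≤ k * (k - 1) / 2 := Nat.div_le_div_right h1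
    omega
  have hn0 : 0 < n := by omega
  haveI : Nonempty (Fin n) := ⟨⟨0, hn0⟩⟩
  haveI hne' : Nonempty G.ConnectedComponent :=
    ⟨G.connectedComponentMk ⟨0, hn0⟩⟩
  constructor
  · -- forward direction
    intro hcard
    have hcard' : Fintype.card G.ConnectedComponent = n - k := by
      rw [← Nat.card_eq_fintype_card]; exact hcard
    -- sum of (size - 1) equals k
    have hsum1 : ∑ C : G.ConnectedComponent, (cSize G C - 1) = k := by
      have h1 : ∑ C : G.ConnectedComponent, (cSize G C - 1 + 1) = n := by
        have h0 : ∑ C : G.ConnectedComponent, (cSize G C - 1 + 1) =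
            ∑ C : G.ConnectedComponent, cSize G C := by
          apply Finset.sum_congr rfl
          intro C _
          have := hpos C
          omega
        rw [h0, hsum]
      rw [Finset.sum_add_distrib] at h1
      simp only [Finset.sum_const, Finset.card_univ, smul_eq_mul, mul_one] at h1
      rw [hcard'] at h1
      omega
    -- pick the biggest component
    obtain ⟨C0, -, hC0max⟩ :=
      Finset.exists_max_image (univ : Finset G.ConnectedComponent) (cSize G)
        ⟨_, Finset.mem_univ (G.connectedComponentMk ⟨0, hn0⟩)⟩
    have hsplit : (cSize G C0 - 1) + ∑ C ∈ univ.erase C0, (cSize G C - 1) = k := by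
      rw [← hsum1, ← Finset.sum_erase_add _ _ (Finset.mem_univ C0)]
      omega
    have hC0le : cSize G C0 ≤ k + 1 := by
      have := hpos C0
      omega
    -- total edge bound
    have hbound : m ≤ (cSize G C0).choose 2 +
        ((∑ C ∈ univ.erase C0, (cSize G C - 1)) + 1).choose 2 := by
      have h1 : m ≤ ∑ C : G.ConnectedComponent, cEdges G C := le_of_eq hesum.symm
      have h2 : ∑ C : G.ConnectedComponent, cEdges G C ≤
          ∑ C : G.ConnectedComponent, (cSize G C).choose 2 :=
        Finset.sum_le_sum (fun C _ => hekey C)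
      have h3 : ∑ C : G.ConnectedComponent, (cSize G C).choose 2 =
          (cSize G C0).choose 2 + ∑ C ∈ univ.erase C0, (cSize G C).choose 2 := by
        rw [← Finset.sum_erase_add _ _ (Finset.mem_univ C0)]
        omega
      have h4 : ∑ C ∈ univ.erase C0, (cSize G C).choose 2 ≤
          ((∑ C ∈ univ.erase C0, (cSize G C - 1)) + 1).choose 2 := by
        calc ∑ C ∈ univ.erase C0, (cSize G C).choose 2
            = ∑ C ∈ univ.erase C0, ((cSize G C - 1) + 1).choose 2 := by
              apply Finset.sum_congr rfl
              intro C _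
              congr 1
              have := hpos C
              omega
          _ ≤ _ := sum_choose_two_le _ _
      omega
    -- the biggest component has exactly k+1 vertices
    have hC0 : cSize G C0 = k + 1 := by
      by_contra hC0ne
      have hC0le' : cSize G C0 ≤ k := by omega
      rcases Nat.lt_or_ge (cSize G C0) 2 with hsmall | hbig
      · -- all components trivial: no edges
        have hall : ∀ C : G.ConnectedComponent, (cSize G C).choose 2 = 0 := by
          intro C
          have h := hC0max C (Finset.mem_univ C)
          have h1 := hpos C
          have : cSize G C = 1 := by omega
          rw [this]
          decide
        have : m ≤ 0 := by
          rw [← hesum]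
          calc ∑ C : G.ConnectedComponent, cEdges G C
              ≤ ∑ C : G.ConnectedComponent, (cSize G C).choose 2 :=
                Finset.sum_le_sum (fun C _ => hekey C)
            _ = 0 := by simp [hall]
        omega
      · -- 2 ≤ cSize G C0 ≤ k : apply choose_two_split
        have key : (cSize G C0).choose 2 +
            ((∑ C ∈ univ.erase C0, (cSize G C - 1)) + 1).choose 2 ≤ k.choose 2 + 1 := by
          obtain ⟨e, hee⟩ : ∃ e, cSize G C0 = e + 2 := ⟨cSize G C0 - 2, by omega⟩
          rcases Nat.eq_zero_or_pos (∑ C ∈ univ.erase C0, (cSize G C - 1)) with hd0 | hd0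
          · exfalso; omega
          · obtain ⟨d', hdd⟩ : ∃ d', ∑ C ∈ univ.erase C0, (cSize G C - 1) = d' + 1 :=
              ⟨(∑ C ∈ univ.erase C0, (cSize G C - 1)) - 1, by omega⟩
            have hk' : k = e + d' + 2 := by omega
            rw [hee, hdd, hk']
            exact choose_two_split e d'
        have hkc : k.choose 2 = k * (k - 1) / 2 := Nat.choose_two_right k
        omega
    -- all other components are singletons
    have hsingle : ∀ C : G.ConnectedComponent, C ≠ C0 → cSize G C = 1 := by
      intro C hC
      have h0 : ∑ C ∈ univ.erase C0, (cSize G C - 1) = 0 := by omega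
      have h1 := Finset.sum_eq_zero_iff.1 h0 C (Finset.mem_erase.2 ⟨hC, Finset.mem_univ C⟩)
      have := hpos C
      omega
    refine ⟨C0, by rw [hsupp_card]; exact hC0, ?_⟩
    intro v hv w hadj
    have hvC : G.connectedComponentMk v ≠ C0 := by
      intro h
      exact hv ((ConnectedComponent.mem_supp_iff _ _).2 h)
    have h1 : cSize G (G.connectedComponentMk v) = 1 := hsingle _ hvC
    have hvw : v ≠ w := hadj.ne
    have h2 : 2 ≤ cSize G (G.connectedComponentMk v) := by
      unfold cSize
      have hsub : ({v, w} : Finset (Fin n)) ⊆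
          univ.filter (fun x => G.connectedComponentMk x = G.connectedComponentMk v) := by
        intro x hx
        rw [Finset.mem_insert, Finset.mem_singleton] at hx
        rw [Finset.mem_filter]
        refine ⟨Finset.mem_univ _, ?_⟩
        rcases hx with rfl | rfl
        · rfl
        · exact (SimpleGraph.ConnectedComponent.connectedComponentMk_eq_of_adj hadj).symm
      calc 2 = ({v, w} : Finset (Fin n)).card := (Finset.card_pair hvw).symm
        _ ≤ _ := Finset.card_le_card hsub
    omega
  · -- reverse direction
    rintro ⟨C, hC, hiso⟩
    have hCs : cSize G C = k + 1 := by rw [← hsupp_card]; exact hC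
    have hsingle : ∀ D : G.ConnectedComponent, D ≠ C → cSize G D = 1 := by
      intro D hD
      obtain ⟨v, hv⟩ := D.exists_rep
      have hvnC : v ∉ C.supp := by
        intro h
        rw [ConnectedComponent.mem_supp_iff] at h
        exact hD (hv ▸ h)
      have hviso := hiso v hvnC
      have hset : (univ : Finset (Fin n)).filter
          (fun x => G.connectedComponentMk x = D) = {v} := by
        ext x
        simp only [Finset.mem_filter, Finset.mem_univ, true_and, Finset.mem_singleton]
        constructor
        · intro hx
          have hreach : G.Reachable v x := by
            rw [← hv] at hx
            exact (SimpleGraph.ConnectedComponent.eq.1 hx).symm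
          exact reachable_eq_of_isolated hviso hreach
        · rintro rfl
          exact hv
      unfold cSize
      rw [hset, Finset.card_singleton]
    have hsum' : ∑ D : G.ConnectedComponent, cSize G D =
        (k + 1) + (Fintype.card G.ConnectedComponent - 1) := by
      rw [← Finset.sum_erase_add _ _ (Finset.mem_univ C), hCs]
      have h1 : ∑ D ∈ univ.erase C, cSize G D = (univ.erase C).card := by
        rw [Finset.card_eq_sum_ones]
        apply Finset.sum_congr rfl
        intro D hD
        exact hsingle D (Finset.mem_erase.1 hD).1
      rw [h1, Finset.card_erase_of_mem (Finset.mem_univ C), Finset.card_univ]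
      omega
    have hcpos : 1 ≤ Fintype.card G.ConnectedComponent := Fintype.card_pos
    rw [Nat.card_eq_fintype_card]
    omega
end
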